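/- arXiv:1702.03871 — 3 statements merged into one kernel-verified Lean document; each statement's English description precedes it below -/
import Mathlib

section
/- Let 0 < R ≤ ∞ and let φ be a quasiconcave function on [0,R). Then there exists a constant C > 0 such that S_φ(f**)(t) ≤ C · S_φ f(t) for every nonnegative nonincreasing measurable function f on (0,R) and every t ∈ (0,R) if and only if φ satisfies the B-condition. -/
open MeasureTheory Set ENNReal Filter

noncomputable section

/-- The open interval `(0, R)` inside `ℝ`, where `R ∈ (0, ∞]` is an extended real. -/
def DomIoo (R : ℝ≥0∞) : Set ℝ := {t : ℝ | 0 < t ∧ ENNReal.ofReal t < R}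

/-- The part of `(0, R)` lying strictly above `t`. -/
def DomAbove (R : ℝ≥0∞) (t : ℝ) : Set ℝ := {s : ℝ | t < s ∧ ENNReal.ofReal s < R}

/-- `φ : [0, R) → [0, ∞)` is quasiconcave: it vanishes exactly at `0`, is nondecreasing,
and `t ↦ φ(t)/t` is nonincreasing on `(0, R)`.  (Values on `(0, R)` are finite.) -/
def QuasiConcaveOn (R : ℝ≥0∞) (φ : ℝ → ℝ≥0∞) : Prop :=
  φ 0 = 0 ∧
  (∀ t ∈ DomIoo R, 0 < φ t ∧ φ t < ⊤) ∧
  (∀ s t : ℝ, 0 ≤ s → s ≤ t → t ∈ DomIoo R → φ s ≤ φ t) ∧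
  (∀ s t : ℝ, s ∈ DomIoo R → s ≤ t → t ∈ DomIoo R →
    φ t / ENNReal.ofReal t ≤ φ s / ENNReal.ofReal s)

/-- `f` is a nonnegative nonincreasing measurable function on `(0, R)`
(nonnegativity is built into the codomain `[0, ∞]`). -/
def NonincOn (R : ℝ≥0∞) (f : ℝ → ℝ≥0∞) : Prop :=
  Measurable f ∧ ∀ s t : ℝ, s ∈ DomIoo R → s ≤ t → t ∈ DomIoo R → f t ≤ f s

/-- The level function `f**(t) = (1/t) ∫₀ᵗ f(s) ds`. -/
def dstar (f : ℝ → ℝ≥0∞) (t : ℝ) : ℝ≥0∞ :=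
  (∫⁻ s in Ioo (0 : ℝ) t, f s) / ENNReal.ofReal t

/-- The supremum operator `S_φ f(t) = (1/φ(t)) ⋅ sup_{0<s<t} φ(s) f(s)`. -/
def Ssup (φ f : ℝ → ℝ≥0∞) (t : ℝ) : ℝ≥0∞ :=
  (⨆ s ∈ Ioo (0 : ℝ) t, φ s * f s) / φ t

/-- The supremum operator `T_ψ f(t) = (1/ψ(t)) ⋅ sup_{t<s<R} ψ(s) f(s)`. -/
def Tsup (R : ℝ≥0∞) (ψ f : ℝ → ℝ≥0∞) (t : ℝ) : ℝ≥0∞ :=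
  (⨆ s ∈ DomAbove R t, ψ s * f s) / ψ t

/-- The `B`-condition: `∫₀ᵗ ds/φ(s) ≤ C ⋅ t/φ(t)` on `(0, R)` for some constant `C > 0`. -/
def BCond (R : ℝ≥0∞) (φ : ℝ → ℝ≥0∞) : Prop :=
  ∃ C : ℝ, 0 < C ∧ ∀ t ∈ DomIoo R,
    (∫⁻ s in Ioo (0 : ℝ) t, 1 / φ s) ≤ ENNReal.ofReal C * (ENNReal.ofReal t / φ t)

/-- A weight on `(0, R)`: positive, measurable and locally integrable
(with finite integral near the origin). -/
def IsWeight (R : ℝ≥0∞) (w : ℝ → ℝ≥0∞) : Prop :=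
  Measurable w ∧ (∀ t ∈ DomIoo R, 0 < w t ∧ w t < ⊤) ∧
  ∀ t ∈ DomIoo R, (∫⁻ s in Ioo (0 : ℝ) t, w s) < ⊤

/-- Nontriviality of a weight `w` for the exponent `p`:
`∫₁^∞ s^{-p} w(s) ds < ∞` when `R = ∞`, and `∫₀ᴿ s^{-p} w(s) ds = ∞` when `R < ∞`. -/
def Nontriv (R : ℝ≥0∞) (p : ℝ) (w : ℝ → ℝ≥0∞) : Prop :=
  (R = ⊤ → (∫⁻ s in Ioi (1 : ℝ), ENNReal.ofReal s ^ (-p) * w s) < ⊤) ∧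
  (R ≠ ⊤ → (∫⁻ s in DomIoo R, ENNReal.ofReal s ^ (-p) * w s) = ⊤)

lemma exists_gt_domIoo {R : ℝ≥0∞} {s : ℝ} (hs : s ∈ DomIoo R) : ∃ t ∈ DomIoo R, s < t := by
  rcases eq_or_ne R ⊤ with rfl | hR
  · exact ⟨s + 1, ⟨by linarith [hs.1], by simp⟩, by linarith⟩
  · have hsR : s < R.toReal := by
      have := hs.2
      rwa [ENNReal.ofReal_lt_iff_lt_toReal hs.1.le hR] at this
    refine ⟨(s + R.toReal)/2, ⟨by linarith [hs.1], ?_⟩, by linarith⟩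
    rw [ENNReal.ofReal_lt_iff_lt_toReal (by linarith [hs.1]) hR]
    linarith

lemma Ioo_subset_dom {R : ℝ≥0∞} {s : ℝ} (hs : s ∈ DomIoo R) : Ioo (0:ℝ) s ⊆ DomIoo R :=
  fun u hu => ⟨hu.1, lt_of_le_of_lt (ENNReal.ofReal_le_ofReal hu.2.le) hs.2⟩

/-- `S_φ(f**) ≲ S_φ f` holds for all nonneg. nonincreasing `f` iff `φ ∈ B`. -/
theorem statement10 (R : ℝ≥0∞) (hR : 0 < R) (φ : ℝ → ℝ≥0∞)
    (hφ : QuasiConcaveOn R φ) :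
    (∃ C : ℝ, 0 < C ∧ ∀ f : ℝ → ℝ≥0∞, NonincOn R f → ∀ t ∈ DomIoo R,
        Ssup φ (dstar f) t ≤ ENNReal.ofReal C * Ssup φ f t) ↔
      BCond R φ := by
  obtain ⟨hφ0, hφfin, hφmono, hφdiv⟩ := hφ
  constructor
  · rintro ⟨C, hC, hS⟩
    refine ⟨C, hC, ?_⟩
    intro s hs
    set f : ℝ → ℝ≥0∞ := fun x => ⨆ u ∈ {u : ℝ | x ≤ u ∧ u ∈ DomIoo R}, (φ u)⁻¹ with hf_def
    have hf_anti : Antitone f := by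
      intro x y hxy
      exact iSup₂_le fun u hu => le_iSup₂ (f := fun u _ => (φ u)⁻¹) u ⟨hxy.trans hu.1, hu.2⟩
    have hf_eq : ∀ u ∈ DomIoo R, f u = (φ u)⁻¹ := by
      intro u hu
      refine le_antisymm (iSup₂_le fun v hv => ?_)
        (le_iSup₂ (f := fun u _ => (φ u)⁻¹) u ⟨le_refl u, hu⟩)
      exact ENNReal.inv_le_inv.mpr (hφmono u v hu.1.le hv.1 hv.2)
    obtain ⟨t, ht, hst⟩ := exists_gt_domIoo hs
    have key := hS f ⟨hf_anti.measurable, fun a b _ hab _ => hf_anti hab⟩ t ht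
    have hφt := hφfin t ht
    have hφs := hφfin s hs
    have h1 : φ s * dstar f s / φ t ≤ ENNReal.ofReal C / φ t := by
      calc φ s * dstar f s / φ t
          ≤ Ssup φ (dstar f) t :=
            ENNReal.div_le_div_right
              (le_iSup₂ (f := fun u (_ : u ∈ Ioo (0:ℝ) t) => φ u * dstar f u) s ⟨hs.1, hst⟩) _
        _ ≤ ENNReal.ofReal C * Ssup φ f t := key
        _ ≤ ENNReal.ofReal C * (1 / φ t) := by
            gcongr
            apply ENNReal.div_le_div_right
            refine iSup₂_le fun u hu => ?_
            have huD := Ioo_subset_dom ht hu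
            rw [hf_eq u huD]
            exact le_of_eq (ENNReal.mul_inv_cancel (hφfin u huD).1.ne' (hφfin u huD).2.ne)
        _ = ENNReal.ofReal C / φ t := by rw [mul_one_div]
    have h2 : φ s * dstar f s ≤ ENNReal.ofReal C := by
      have h3 := mul_le_mul_left h1 (φ t)
      rwa [ENNReal.div_mul_cancel hφt.1.ne' hφt.2.ne,
        ENNReal.div_mul_cancel hφt.1.ne' hφt.2.ne] at h3
    have hInt : (∫⁻ u in Ioo (0:ℝ) s, 1 / φ u) = ∫⁻ u in Ioo (0:ℝ) s, f u := by
      refine setLIntegral_congr_fun measurableSet_Ioo (fun u hu => ?_)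
      rw [hf_eq u (Ioo_subset_dom hs hu), one_div]
    have hb0 : ENNReal.ofReal s ≠ 0 := (ENNReal.ofReal_pos.mpr hs.1).ne'
    rw [hInt, ← mul_div_assoc,
      ENNReal.le_div_iff_mul_le (Or.inl hφs.1.ne') (Or.inl hφs.2.ne), mul_comm]
    rw [dstar, ← mul_div_assoc,
      ENNReal.div_le_iff_le_mul (Or.inl hb0) (Or.inl ENNReal.ofReal_ne_top)] at h2
    exact h2
  · rintro ⟨C, hC, hB⟩
    refine ⟨C, hC, ?_⟩
    intro f hf t ht
    set A := ⨆ s ∈ Ioo (0:ℝ) t, φ s * f s with hA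
    have hφt := hφfin t ht
    rcases eq_or_ne A ⊤ with hAtop | hAfin
    · have hr : ENNReal.ofReal C * Ssup φ f t = ⊤ := by
        rw [Ssup, ← hA, hAtop, ENNReal.top_div_of_lt_top hφt.2, ENNReal.mul_top
          (ENNReal.ofReal_pos.mpr hC).ne']
      simp [hr]
    · have hkey : ∀ s ∈ Ioo (0:ℝ) t, φ s * dstar f s ≤ ENNReal.ofReal C * A := by
        intro s hs
        have hsD := Ioo_subset_dom ht hs
        have hφs := hφfin s hsD
        have hb0 : ENNReal.ofReal s ≠ 0 := (ENNReal.ofReal_pos.mpr hs.1).ne'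
        have hIle : (∫⁻ u in Ioo (0:ℝ) s, f u)
            ≤ ENNReal.ofReal C * A * ENNReal.ofReal s / φ s := by
          calc (∫⁻ u in Ioo (0:ℝ) s, f u)
              ≤ ∫⁻ u in Ioo (0:ℝ) s, A * (1 / φ u) := by
                refine lintegral_mono_ae ((ae_restrict_iff' measurableSet_Ioo).mpr
                  (ae_of_all _ fun u hu => ?_))
                have huD := Ioo_subset_dom hsD hu
                rw [mul_one_div, ENNReal.le_div_iff_mul_le (Or.inl (hφfin u huD).1.ne')
                  (Or.inl (hφfin u huD).2.ne), mul_comm]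
                exact le_iSup₂ (f := fun u (_ : u ∈ Ioo (0:ℝ) t) => φ u * f u) u
                  ⟨hu.1, hu.2.trans hs.2⟩
            _ = A * ∫⁻ u in Ioo (0:ℝ) s, 1 / φ u := lintegral_const_mul' _ _ hAfin
            _ ≤ A * (ENNReal.ofReal C * (ENNReal.ofReal s / φ s)) := by
                gcongr
                exact hB s hsD
            _ = ENNReal.ofReal C * A * ENNReal.ofReal s / φ s := by
                rw [← mul_assoc, mul_comm A, mul_div_assoc]
        rw [dstar, ← mul_div_assoc,
          ENNReal.div_le_iff_le_mul (Or.inl hb0) (Or.inl ENNReal.ofReal_ne_top)]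
        calc φ s * ∫⁻ u in Ioo (0:ℝ) s, f u
            ≤ φ s * (ENNReal.ofReal C * A * ENNReal.ofReal s / φ s) := by gcongr
          _ = ENNReal.ofReal C * A * ENNReal.ofReal s :=
              ENNReal.mul_div_cancel hφs.1.ne' hφs.2.ne
      rw [Ssup, Ssup, ← hA, ← mul_div_assoc]
      exact ENNReal.div_le_div_right (iSup₂_le hkey) _
end
end

section
/- Let 0 < R ≤ ∞ and let φ and ψ be quasiconcave functions on [0,R). Then there exists a constant C > 0 such that C⁻¹ · (S_φ f(t) + T_ψ f(t)) ≤ S_φ(f**)(t) + T_ψ(f**)(t) ≤ C · (S_φ f(t) + T_ψ f(t)) for every nonnegative nonincreasing measurable function f on (0,R) and every t ∈ (0,R) if and only if both φ and ψ satisfy the B-condition. -/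
open MeasureTheory Set ENNReal Filter

noncomputable section

namespace S11

variable {R : ℝ≥0∞} {φ ψ : ℝ → ℝ≥0∞}

variable {R : ℝ≥0∞} {φ ψ : ℝ → ℝ≥0∞}

lemma mulDivCancelRight (a : ℝ≥0∞) {b : ℝ≥0∞} (h0 : b ≠ 0) (ht : b ≠ ⊤) : a * b / b = a := by
  rw [mul_div_assoc, ENNReal.div_self h0 ht, mul_one]

lemma div_le_div_cancel' {a c b : ℝ≥0∞} (hb0 : b ≠ 0) (hbt : b ≠ ⊤) (h : a / b ≤ c / b) : a ≤ c := by
  have := mul_le_mul_left h b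
  rwa [ENNReal.div_mul_cancel hb0 hbt, ENNReal.div_mul_cancel hb0 hbt] at this

lemma int_bound {I c s φs : ℝ≥0∞} (hs0 : s ≠ 0) (hst : s ≠ ⊤) (hφ0 : φs ≠ 0) (hφt : φs ≠ ⊤)
    (h : φs * (I / s) ≤ c) : I ≤ c * (s / φs) := by
  have h1 : I / s ≤ c / φs := by
    have : φs * (I / s) / φs ≤ c / φs := ENNReal.div_le_div_right h _
    rwa [mul_comm, mulDivCancelRight _ hφ0 hφt] at this
  have h2 := mul_le_mul_right h1 s
  rw [ENNReal.mul_div_cancel hs0 hst] at h2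
  calc I ≤ s * (c / φs) := h2
    _ = c * (s / φs) := by rw [div_eq_mul_inv, div_eq_mul_inv, ← mul_assoc, ← mul_assoc, mul_comm s c]

lemma dom_of_mem_Ioo {t s : ℝ} (ht : t ∈ DomIoo R) (hs : s ∈ Ioo (0:ℝ) t) : s ∈ DomIoo R :=
  ⟨hs.1, lt_of_le_of_lt (ENNReal.ofReal_le_ofReal hs.2.le) ht.2⟩

lemma dom_of_above {t s : ℝ} (ht : t ∈ DomIoo R) (hs : s ∈ DomAbove R t) : s ∈ DomIoo R :=
  ⟨ht.1.trans hs.1, hs.2⟩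

lemma exists_gt_dom {t : ℝ} (ht : t ∈ DomIoo R) : ∃ t', t' ∈ DomIoo R ∧ t < t' := by
  rcases eq_or_ne R ⊤ with hR | hR
  · exact ⟨t + 1, ⟨by linarith [ht.1], hR ▸ ENNReal.ofReal_lt_top⟩, by linarith⟩
  · have htR : t < R.toReal := by
      rw [← ENNReal.ofReal_lt_iff_lt_toReal ht.1.le hR]; exact ht.2
    refine ⟨(t + R.toReal) / 2, ⟨by linarith [ht.1], ?_⟩, by linarith⟩
    have h2 : (t + R.toReal) / 2 < R.toReal := by linarith
    calc ENNReal.ofReal ((t + R.toReal) / 2) < ENNReal.ofReal R.toReal :=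
          (ENNReal.ofReal_lt_ofReal_iff (by linarith [ht.1])).mpr h2
      _ = R := ENNReal.ofReal_toReal hR

section QC
variable (hq : QuasiConcaveOn R φ)
include hq

lemma qc_pos {t : ℝ} (ht : t ∈ DomIoo R) : φ t ≠ 0 := (hq.2.1 t ht).1.ne'
lemma qc_ne_top {t : ℝ} (ht : t ∈ DomIoo R) : φ t ≠ ⊤ := (hq.2.1 t ht).2.ne
lemma qc_mono {s t : ℝ} (hs : 0 ≤ s) (hst : s ≤ t) (ht : t ∈ DomIoo R) : φ s ≤ φ t :=
  hq.2.2.1 s t hs hst ht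

lemma qc_lower {s t : ℝ} (hs : s ∈ DomIoo R) (hst : s ≤ t) (ht : t ∈ DomIoo R) :
    ENNReal.ofReal s * (φ t / ENNReal.ofReal t) ≤ φ s := by
  have h := hq.2.2.2 s t hs hst ht
  calc ENNReal.ofReal s * (φ t / ENNReal.ofReal t) ≤ ENNReal.ofReal s * (φ s / ENNReal.ofReal s) :=
        mul_le_mul_right h _
    _ = φ s := ENNReal.mul_div_cancel (ENNReal.ofReal_pos.mpr hs.1).ne' ENNReal.ofReal_ne_top

end QC

lemma iSup_ofReal_Ioo {t : ℝ} (ht : 0 < t) :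
    (⨆ s ∈ Ioo (0:ℝ) t, ENNReal.ofReal s) = ENNReal.ofReal t := by
  apply le_antisymm
  · exact iSup₂_le fun s hs => ENNReal.ofReal_le_ofReal hs.2.le
  · have htend : Tendsto (fun n : ℕ => ENNReal.ofReal (t - t / (n + 2))) atTop
        (nhds (ENNReal.ofReal t)) := by
      apply (ENNReal.continuous_ofReal.tendsto t).comp
      have h0 : Tendsto (fun n : ℕ => t / (n + 2)) atTop (nhds 0) := by
        have h0' := (tendsto_const_div_atTop_nhds_zero_nat t).comp (tendsto_add_atTop_nat 2)
        simp only [Function.comp_def] at h0'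
        convert h0' using 2 with n
        push_cast; ring
      have := tendsto_const_nhds (x := t) (f := atTop (α := ℕ)).sub h0
      simpa using this
    refine le_of_tendsto htend (Eventually.of_forall fun n => ?_)
    have hn : (0:ℝ) < (n:ℝ) + 2 := by positivity
    have h1 : 0 < t - t / (n + 2) := by
      have : t / (n + 2) < t := by
        rw [div_lt_iff₀ hn]; nlinarith
      linarith
    have h2 : t - t / (n + 2) < t := by
      have : 0 < t / (n + 2) := by positivity
      linarith
    exact le_iSup₂_of_le _ ⟨h1, h2⟩ le_rfl


lemma biSup_mul {A : Set ℝ} (g : ℝ → ℝ≥0∞) (c : ℝ≥0∞) :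
    (⨆ s ∈ A, g s) * c = ⨆ s ∈ A, g s * c := by
  simp only [ENNReal.iSup_mul]

lemma qc_sup (hq : QuasiConcaveOn R φ) {t : ℝ} (ht : t ∈ DomIoo R) :
    (⨆ s ∈ Ioo (0:ℝ) t, φ s) = φ t := by
  apply le_antisymm
  · exact iSup₂_le fun s hs => qc_mono hq hs.1.le hs.2.le ht
  · calc φ t = ENNReal.ofReal t * (φ t / ENNReal.ofReal t) :=
        (ENNReal.mul_div_cancel (ENNReal.ofReal_pos.mpr ht.1).ne' ENNReal.ofReal_ne_top).symm
      _ = (⨆ s ∈ Ioo (0:ℝ) t, ENNReal.ofReal s) * (φ t / ENNReal.ofReal t) := by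
          rw [iSup_ofReal_Ioo ht.1]
      _ = ⨆ s ∈ Ioo (0:ℝ) t, ENNReal.ofReal s * (φ t / ENNReal.ofReal t) :=
          biSup_mul _ _
      _ ≤ ⨆ s ∈ Ioo (0:ℝ) t, φ s :=
          iSup₂_mono fun s hs => qc_lower hq (dom_of_mem_Ioo ht hs) hs.2.le ht

def Phi (R : ℝ≥0∞) (φ : ℝ → ℝ≥0∞) : ℝ → ℝ≥0∞ :=
  fun s => ⨆ u ∈ Ioo (0:ℝ) s ∩ DomIoo R, φ u

lemma Phi_mono : Monotone (Phi R φ) := fun a b hab =>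
  biSup_mono fun u hu => ⟨⟨hu.1.1, hu.1.2.trans_le hab⟩, hu.2⟩

lemma Phi_measurable : Measurable (Phi R φ) := Phi_mono.measurable

lemma Phi_eq (hq : QuasiConcaveOn R φ) {t : ℝ} (ht : t ∈ DomIoo R) : Phi R φ t = φ t := by
  unfold Phi
  rw [inter_eq_self_of_subset_left (fun s hs => dom_of_mem_Ioo ht hs)]
  exact qc_sup hq ht



variable {R : ℝ≥0∞} {φ ψ : ℝ → ℝ≥0∞}

lemma le_dstar {f : ℝ → ℝ≥0∞} (hf : NonincOn R f) {s : ℝ} (hs : s ∈ DomIoo R) :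
    f s ≤ dstar f s := by
  have h1 : f s * ENNReal.ofReal s = ∫⁻ _ in Ioo (0:ℝ) s, f s := by
    rw [setLIntegral_const, Real.volume_Ioo, sub_zero]
  have h2 : (∫⁻ _ in Ioo (0:ℝ) s, f s) ≤ ∫⁻ u in Ioo (0:ℝ) s, f u :=
    lintegral_mono_ae (ae_restrict_of_forall_mem measurableSet_Ioo
      (fun u hu => hf.2 u s (dom_of_mem_Ioo hs hu) hu.2.le hs))
  calc f s = f s * ENNReal.ofReal s / ENNReal.ofReal s :=
        (mulDivCancelRight _ (ENNReal.ofReal_pos.mpr hs.1).ne' ENNReal.ofReal_ne_top).symm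
    _ ≤ (∫⁻ u in Ioo (0:ℝ) s, f u) / ENNReal.ofReal s :=
        ENNReal.div_le_div_right (h1 ▸ h2) _
    _ = dstar f s := rfl

/-- Key integral bound coming from the B-condition. -/
lemma integral_bound (hq : QuasiConcaveOn R φ) {Cφ : ℝ} (hC : 0 < Cφ)
    (hB : ∀ t ∈ DomIoo R,
      (∫⁻ s in Ioo (0 : ℝ) t, 1 / φ s) ≤ ENNReal.ofReal Cφ * (ENNReal.ofReal t / φ t))
    {f : ℝ → ℝ≥0∞} {s : ℝ} (hs : s ∈ DomIoo R) {A : ℝ≥0∞} {E : Set ℝ}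
    (hE : MeasurableSet E) (hEsub : E ⊆ Ioo (0:ℝ) s) (hA : ∀ u ∈ E, φ u * f u ≤ A) :
    (∫⁻ u in E, f u) ≤ ENNReal.ofReal Cφ * (ENNReal.ofReal s / φ s) * A := by
  rcases eq_or_ne A ⊤ with hAtop | hAne
  · have hne : ENNReal.ofReal Cφ * (ENNReal.ofReal s / φ s) ≠ 0 := by
      apply mul_ne_zero (ENNReal.ofReal_pos.mpr hC).ne'
      simp only [ne_eq, ENNReal.div_eq_zero_iff, not_or]
      exact ⟨(ENNReal.ofReal_pos.mpr hs.1).ne', qc_ne_top hq hs⟩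
    rw [hAtop, ENNReal.mul_top hne]
    exact le_top
  · have hpt : ∀ u ∈ E, f u ≤ A * (φ u)⁻¹ := by
      intro u hu
      have hud : u ∈ DomIoo R := dom_of_mem_Ioo hs (hEsub hu)
      calc f u = φ u * f u / φ u := by
            rw [mul_comm, mulDivCancelRight _ (qc_pos hq hud) (qc_ne_top hq hud)]
        _ ≤ A / φ u := ENNReal.div_le_div_right (hA u hu) _
        _ = A * (φ u)⁻¹ := div_eq_mul_inv _ _
    calc (∫⁻ u in E, f u) ≤ ∫⁻ u in E, A * (φ u)⁻¹ :=
          lintegral_mono_ae (ae_restrict_of_forall_mem hE hpt)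
      _ ≤ ∫⁻ u in Ioo (0:ℝ) s, A * (φ u)⁻¹ := lintegral_mono_set hEsub
      _ = A * ∫⁻ u in Ioo (0:ℝ) s, (φ u)⁻¹ := lintegral_const_mul' A _ hAne
      _ = A * ∫⁻ u in Ioo (0:ℝ) s, 1 / φ u := by
          congr 1; exact lintegral_congr fun u => by rw [one_div]
      _ ≤ A * (ENNReal.ofReal Cφ * (ENNReal.ofReal s / φ s)) :=
          mul_le_mul_right (hB s hs) _
      _ = ENNReal.ofReal Cφ * (ENNReal.ofReal s / φ s) * A := mul_comm _ _

/-- Pass to the limit `t → 0⁺` in integrals over `(t, s₀)`. -/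
lemma lintegral_Ioo_zero_le {s₀ : ℝ} (hs₀ : 0 < s₀) {h : ℝ → ℝ≥0∞} (hm : Measurable h)
    {c : ℝ≥0∞} (H : ∀ t : ℝ, 0 < t → t < s₀ → (∫⁻ u in Ioo t s₀, h u) ≤ c) :
    (∫⁻ u in Ioo (0:ℝ) s₀, h u) ≤ c := by
  set g : ℕ → ℝ → ℝ≥0∞ := fun n => (Ioo (s₀ / (n + 2)) s₀).indicator h with hg
  have hmem : ∀ n : ℕ, 0 < s₀ / ((n:ℝ) + 2) ∧ s₀ / ((n:ℝ) + 2) < s₀ := by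
    intro n
    constructor
    · positivity
    · rw [div_lt_iff₀ (by positivity)]; nlinarith
  have hmono : Monotone g := by
    intro m n hmn u
    simp only [hg]
    apply indicator_le_indicator_of_subset _ (fun _ => zero_le)
    apply Ioo_subset_Ioo _ le_rfl
    apply div_le_div_of_nonneg_left hs₀.le (by positivity)
    exact_mod_cast by omega
  have hsup : ∀ u, (⨆ n, g n u) = (Ioo (0:ℝ) s₀).indicator h u := by
    intro u
    by_cases hu : u ∈ Ioo (0:ℝ) s₀
    · obtain ⟨n, hn⟩ := exists_nat_gt (s₀ / u)
      have hun : u ∈ Ioo (s₀ / ((n:ℝ) + 2)) s₀ := by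
        constructor
        · rw [div_lt_iff₀ (by positivity)]
          have h1 : s₀ / u < n := hn
          rw [div_lt_iff₀ hu.1] at h1
          nlinarith [hu.1]
        · exact hu.2
      apply le_antisymm
      · exact iSup_le fun m => (indicator_le_indicator_of_subset
          (Ioo_subset_Ioo (by positivity) le_rfl) (fun _ => zero_le)) u
      · rw [indicator_of_mem hu]
        refine le_trans ?_ (le_iSup _ n)
        simp only [hg]
        rw [indicator_of_mem hun]
    · rw [indicator_of_notMem hu]
      simp only [hg, le_zero_iff, iSup_eq_zero]
      intro n
      apply indicator_of_notMem
      intro hun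
      exact hu ⟨(hmem n).1.trans hun.1, hun.2⟩
  have hgm : ∀ n, Measurable (g n) := fun n => hm.indicator measurableSet_Ioo
  calc (∫⁻ u in Ioo (0:ℝ) s₀, h u) = ∫⁻ u, (Ioo (0:ℝ) s₀).indicator h u :=
        (lintegral_indicator measurableSet_Ioo h).symm
    _ = ∫⁻ u, ⨆ n, g n u := by
        apply lintegral_congr; intro u; rw [hsup]
    _ = ⨆ n, ∫⁻ u, g n u := lintegral_iSup hgm (fun m n hmn u => hmono hmn u)
    _ ≤ c := by
        apply iSup_le
        intro n
        simp only [hg]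
        rw [lintegral_indicator measurableSet_Ioo]
        exact H _ (hmem n).1 (hmem n).2


lemma nec_phi (hqφ : QuasiConcaveOn R φ) {C : ℝ}
    (H : ∀ f : ℝ → ℝ≥0∞, NonincOn R f → ∀ t ∈ DomIoo R,
      Ssup φ (dstar f) t + Tsup R ψ (dstar f) t ≤
        ENNReal.ofReal C * (Ssup φ f t + Tsup R ψ f t)) :
    BCond R φ := by
  refine ⟨max C 1, lt_of_lt_of_le one_pos (le_max_right _ _), fun s hs => ?_⟩
  obtain ⟨t, ht, hst⟩ := exists_gt_dom hs
  set f : ℝ → ℝ≥0∞ := fun u => if u < t then (Phi R φ u)⁻¹ else 0 with hfdef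
  have hfm : Measurable f := Measurable.ite measurableSet_Iio Phi_measurable.inv measurable_const
  have hfd : NonincOn R f := by
    refine ⟨hfm, fun a b ha hab hb => ?_⟩
    simp only [hfdef]
    by_cases hbt : b < t
    · rw [if_pos hbt, if_pos (lt_of_le_of_lt hab hbt)]
      exact ENNReal.inv_le_inv' (Phi_mono hab)
    · rw [if_neg hbt]; exact zero_le
  have h2 := H f hfd t ht
  -- compute `Tsup R ψ f t = 0`
  have hT : Tsup R ψ f t = 0 := by
    unfold Tsup
    have : (⨆ u ∈ DomAbove R t, ψ u * f u) = 0 := by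
      refine le_antisymm (iSup₂_le fun u hu => ?_) (zero_le)
      simp only [hfdef, if_neg (not_lt.mpr hu.1.le), mul_zero, le_refl]
    rw [this, ENNReal.zero_div]
  -- compute `Ssup φ f t = 1 / φ t`
  have hS : Ssup φ f t = 1 / φ t := by
    unfold Ssup
    congr 1
    have heq : ∀ u ∈ Ioo (0:ℝ) t, φ u * f u = 1 := by
      intro u hu
      have hud : u ∈ DomIoo R := dom_of_mem_Ioo ht hu
      simp only [hfdef, if_pos hu.2, Phi_eq hqφ hud]
      exact ENNReal.mul_inv_cancel (qc_pos hqφ hud) (qc_ne_top hqφ hud)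
    calc (⨆ u ∈ Ioo (0:ℝ) t, φ u * f u) = ⨆ u ∈ Ioo (0:ℝ) t, (1:ℝ≥0∞) :=
          biSup_congr heq
      _ = 1 := biSup_const (nonempty_Ioo.mpr ht.1)
  rw [hS, hT, add_zero, mul_one_div] at h2
  have hsup : (⨆ u ∈ Ioo (0:ℝ) t, φ u * dstar f u) ≤ ENNReal.ofReal (max C 1) := by
    apply div_le_div_cancel' (qc_pos hqφ ht) (qc_ne_top hqφ ht)
    refine le_trans (le_trans (le_add_right le_rfl) h2) ?_
    apply ENNReal.div_le_div_right
    exact ENNReal.ofReal_le_ofReal (le_max_left _ _)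
  have hkey : φ s * dstar f s ≤ ENNReal.ofReal (max C 1) :=
    le_trans (le_iSup₂_of_le s ⟨hs.1, hst⟩ le_rfl) hsup
  have hcong : (∫⁻ u in Ioo (0:ℝ) s, f u) = ∫⁻ u in Ioo (0:ℝ) s, 1 / φ u := by
    apply lintegral_congr_ae
    apply ae_restrict_of_forall_mem measurableSet_Ioo
    intro u hu
    have hud : u ∈ DomIoo R := dom_of_mem_Ioo hs hu
    simp only [hfdef, if_pos (hu.2.trans hst), Phi_eq hqφ hud, one_div]
  have := int_bound (ENNReal.ofReal_pos.mpr hs.1).ne' ENNReal.ofReal_ne_top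
    (qc_pos hqφ hs) (qc_ne_top hqφ hs) hkey
  unfold dstar at this
  rwa [hcong] at this


lemma nec_psi (hqφ : QuasiConcaveOn R φ) (hqψ : QuasiConcaveOn R ψ) {C : ℝ}
    (H : ∀ f : ℝ → ℝ≥0∞, NonincOn R f → ∀ t ∈ DomIoo R,
      Ssup φ (dstar f) t + Tsup R ψ (dstar f) t ≤
        ENNReal.ofReal C * (Ssup φ f t + Tsup R ψ f t)) :
    BCond R ψ := by
  refine ⟨2 * max C 1, by positivity, fun s₀ hs₀ => ?_⟩
  obtain ⟨τ, hτ, hs₀τ⟩ := exists_gt_dom hs₀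
  set D : ℝ≥0∞ := ENNReal.ofReal (2 * max C 1) with hD
  -- main estimate for each `t ∈ (0, s₀)`
  have main : ∀ t : ℝ, 0 < t → t < s₀ →
      (∫⁻ u in Ioo t s₀, 1 / ψ u) ≤ D * (ENNReal.ofReal s₀ / ψ s₀) := by
    intro t ht0 hts₀
    have htd : t ∈ DomIoo R := dom_of_mem_Ioo hs₀ ⟨ht0, hts₀⟩
    set g : ℝ → ℝ≥0∞ := fun u => if u < τ then (Phi R ψ (max u t))⁻¹ else 0 with hgdef
    have hgm : Measurable g := Measurable.ite measurableSet_Iio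
      ((Phi_measurable.comp (measurable_id.max measurable_const)).inv) measurable_const
    have hgd : NonincOn R g := by
      refine ⟨hgm, fun a b ha hab hb => ?_⟩
      simp only [hgdef]
      by_cases hbτ : b < τ
      · rw [if_pos hbτ, if_pos (lt_of_le_of_lt hab hbτ)]
        exact ENNReal.inv_le_inv' (Phi_mono (max_le_max hab le_rfl))
      · rw [if_neg hbτ]; exact zero_le
    have h2 := H g hgd t htd
    have hS : Ssup φ g t ≤ (ψ t)⁻¹ := by
      unfold Ssup
      have hsb : (⨆ u ∈ Ioo (0:ℝ) t, φ u * g u) ≤ φ t * (ψ t)⁻¹ := by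
        refine iSup₂_le fun u hu => ?_
        have hgu : g u = (ψ t)⁻¹ := by
          simp only [hgdef, if_pos (hu.2.trans (hts₀.trans hs₀τ)), max_eq_right hu.2.le,
            Phi_eq hqψ htd]
        rw [hgu]
        exact mul_le_mul_left (qc_mono hqφ hu.1.le hu.2.le htd) _
      refine le_trans (ENNReal.div_le_div_right hsb _) ?_
      rw [mul_comm, mulDivCancelRight _ (qc_pos hqφ htd) (qc_ne_top hqφ htd)]
    have hT : Tsup R ψ g t ≤ (ψ t)⁻¹ := by
      unfold Tsup
      have hsb : (⨆ u ∈ DomAbove R t, ψ u * g u) ≤ 1 := by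
        refine iSup₂_le fun u hu => ?_
        have hud : u ∈ DomIoo R := dom_of_above htd hu
        by_cases huτ : u < τ
        · simp only [hgdef, if_pos huτ, max_eq_left hu.1.le, Phi_eq hqψ hud]
          rw [ENNReal.mul_inv_cancel (qc_pos hqψ hud) (qc_ne_top hqψ hud)]
        · simp only [hgdef, if_neg huτ, mul_zero]; exact zero_le
      refine le_trans (ENNReal.div_le_div_right hsb _) ?_
      rw [one_div]
    have hrhs : ENNReal.ofReal C * (Ssup φ g t + Tsup R ψ g t) ≤ D / ψ t := by
      have h3 : Ssup φ g t + Tsup R ψ g t ≤ 2 * (ψ t)⁻¹ := by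
        rw [two_mul]; exact add_le_add hS hT
      calc ENNReal.ofReal C * (Ssup φ g t + Tsup R ψ g t)
          ≤ ENNReal.ofReal (max C 1) * (2 * (ψ t)⁻¹) :=
            mul_le_mul' (ENNReal.ofReal_le_ofReal (le_max_left _ _)) h3
        _ = D / ψ t := by
            rw [hD, ENNReal.ofReal_mul (by norm_num : (0:ℝ) ≤ 2), div_eq_mul_inv]
            rw [show (ENNReal.ofReal 2) = 2 from by norm_num]
            ring
    have hsup : (⨆ u ∈ DomAbove R t, ψ u * dstar g u) ≤ D := by
      apply div_le_div_cancel' (qc_pos hqψ htd) (qc_ne_top hqψ htd)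
      exact le_trans (le_trans (le_add_left le_rfl) h2) hrhs
    have hkey : ψ s₀ * dstar g s₀ ≤ D :=
      le_trans (le_iSup₂_of_le s₀ ⟨hts₀, hs₀.2⟩ le_rfl) hsup
    have hlow : (∫⁻ u in Ioo t s₀, 1 / ψ u) ≤ ∫⁻ u in Ioo (0:ℝ) s₀, g u := by
      have hcong : (∫⁻ u in Ioo t s₀, 1 / ψ u) = ∫⁻ u in Ioo t s₀, g u := by
        apply lintegral_congr_ae
        apply ae_restrict_of_forall_mem measurableSet_Ioo
        intro u hu
        have hud : u ∈ DomIoo R := ⟨ht0.trans hu.1, lt_of_le_of_lt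
          (ENNReal.ofReal_le_ofReal hu.2.le) hs₀.2⟩
        simp only [hgdef, if_pos (hu.2.trans hs₀τ), max_eq_left (le_of_lt hu.1),
          Phi_eq hqψ hud, one_div]
      rw [hcong]
      exact lintegral_mono_set (Ioo_subset_Ioo ht0.le le_rfl)
    have hkey2 : ψ s₀ * ((∫⁻ u in Ioo t s₀, 1 / ψ u) / ENNReal.ofReal s₀) ≤ D := by
      refine le_trans ?_ hkey
      exact mul_le_mul_right (ENNReal.div_le_div_right hlow _) _
    exact int_bound (ENNReal.ofReal_pos.mpr hs₀.1).ne' ENNReal.ofReal_ne_top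
      (qc_pos hqψ hs₀) (qc_ne_top hqψ hs₀) hkey2
  -- pass to the limit `t → 0⁺`
  have hcongr : ∀ a : ℝ, 0 ≤ a →
      (∫⁻ u in Ioo a s₀, 1 / ψ u) = ∫⁻ u in Ioo a s₀, (Phi R ψ u)⁻¹ := by
    intro a ha
    apply lintegral_congr_ae
    apply ae_restrict_of_forall_mem measurableSet_Ioo
    intro u hu
    have hud : u ∈ DomIoo R := ⟨lt_of_le_of_lt ha hu.1, lt_of_le_of_lt
      (ENNReal.ofReal_le_ofReal hu.2.le) hs₀.2⟩
    simp only [Phi_eq hqψ hud, one_div]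
  rw [hcongr 0 le_rfl]
  apply lintegral_Ioo_zero_le hs₀.1 Phi_measurable.inv
  intro t ht0 hts₀
  simp only [Pi.inv_apply]
  rw [← hcongr t ht0.le]
  exact main t ht0 hts₀


lemma lower_bound {f : ℝ → ℝ≥0∞} (hf : NonincOn R f) {t : ℝ} (ht : t ∈ DomIoo R) :
    Ssup φ f t + Tsup R ψ f t ≤ Ssup φ (dstar f) t + Tsup R ψ (dstar f) t := by
  apply add_le_add
  · exact ENNReal.div_le_div_right (iSup₂_mono fun s hs =>
      mul_le_mul_right (le_dstar hf (dom_of_mem_Ioo ht hs)) _) _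
  · exact ENNReal.div_le_div_right (iSup₂_mono fun s hs =>
      mul_le_mul_right (le_dstar hf (dom_of_above ht hs)) _) _

lemma cancel₂ {c A s φs : ℝ≥0∞} (hs0 : s ≠ 0) (hst : s ≠ ⊤) (h0 : φs ≠ 0) (ht : φs ≠ ⊤) :
    φs * ((c * (s / φs) * A) / s) = c * A := by
  rw [div_eq_mul_inv s φs, div_eq_mul_inv _ s,
    show φs * (c * (s * φs⁻¹) * A * s⁻¹) = c * A * (φs * φs⁻¹) * (s * s⁻¹) from by ring,
    ENNReal.mul_inv_cancel h0 ht, ENNReal.mul_inv_cancel hs0 hst, mul_one, mul_one]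

lemma cancel₃ {c A tt ψt φt : ℝ≥0∞} (ht0 : tt ≠ 0) (htt : tt ≠ ⊤) :
    (ψt / tt) * (c * (tt / φt) * A) = c * (A / φt) * ψt := by
  rw [div_eq_mul_inv ψt, div_eq_mul_inv tt, div_eq_mul_inv A,
    show ψt * tt⁻¹ * (c * (tt * φt⁻¹) * A) = c * (A * φt⁻¹) * ψt * (tt * tt⁻¹) from by ring,
    ENNReal.mul_inv_cancel ht0 htt, mul_one]

lemma upper_S (hqφ : QuasiConcaveOn R φ) {Cφ : ℝ} (hCφ : 0 < Cφ)
    (hBφ : ∀ t ∈ DomIoo R,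
      (∫⁻ s in Ioo (0 : ℝ) t, 1 / φ s) ≤ ENNReal.ofReal Cφ * (ENNReal.ofReal t / φ t))
    {f : ℝ → ℝ≥0∞} {t : ℝ} (ht : t ∈ DomIoo R) :
    Ssup φ (dstar f) t ≤ ENNReal.ofReal Cφ * Ssup φ f t := by
  unfold Ssup
  set A := ⨆ u ∈ Ioo (0:ℝ) t, φ u * f u with hA
  have hAle : ∀ u ∈ Ioo (0:ℝ) t, φ u * f u ≤ A := by
    intro u hu; rw [hA]; exact le_iSup₂_of_le u hu le_rfl
  have hbound : ∀ s ∈ Ioo (0:ℝ) t, φ s * dstar f s ≤ ENNReal.ofReal Cφ * A := by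
    intro s hsm
    have hsd := dom_of_mem_Ioo ht hsm
    have hI := integral_bound hqφ hCφ hBφ hsd measurableSet_Ioo (subset_refl _)
      (fun u (hu : u ∈ Ioo (0:ℝ) s) => hAle u ⟨hu.1, hu.2.trans hsm.2⟩)
    calc φ s * dstar f s
        ≤ φ s * ((ENNReal.ofReal Cφ * (ENNReal.ofReal s / φ s) * A) / ENNReal.ofReal s) :=
          mul_le_mul_right (ENNReal.div_le_div_right hI _) _
      _ = ENNReal.ofReal Cφ * A := cancel₂ (ENNReal.ofReal_pos.mpr hsd.1).ne'
          ENNReal.ofReal_ne_top (qc_pos hqφ hsd) (qc_ne_top hqφ hsd)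
  calc (⨆ s ∈ Ioo (0:ℝ) t, φ s * dstar f s) / φ t
      ≤ (ENNReal.ofReal Cφ * A) / φ t := ENNReal.div_le_div_right (iSup₂_le hbound) _
    _ = ENNReal.ofReal Cφ * (A / φ t) := mul_div_assoc _ _ _

lemma upper_T (hqφ : QuasiConcaveOn R φ) (hqψ : QuasiConcaveOn R ψ)
    {Cφ Cψ : ℝ} (hCφ : 0 < Cφ) (hCψ : 0 < Cψ)
    (hBφ : ∀ t ∈ DomIoo R,
      (∫⁻ s in Ioo (0 : ℝ) t, 1 / φ s) ≤ ENNReal.ofReal Cφ * (ENNReal.ofReal t / φ t))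
    (hBψ : ∀ t ∈ DomIoo R,
      (∫⁻ s in Ioo (0 : ℝ) t, 1 / ψ s) ≤ ENNReal.ofReal Cψ * (ENNReal.ofReal t / ψ t))
    {f : ℝ → ℝ≥0∞} {t : ℝ} (ht : t ∈ DomIoo R) :
    Tsup R ψ (dstar f) t ≤
      ENNReal.ofReal Cφ * Ssup φ f t + ENNReal.ofReal Cψ * Tsup R ψ f t := by
  set A := ⨆ u ∈ Ioo (0:ℝ) t, φ u * f u with hA
  set B := ⨆ u ∈ DomAbove R t, ψ u * f u with hB
  have hAle : ∀ u ∈ Ioo (0:ℝ) t, φ u * f u ≤ A := by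
    intro u hu; rw [hA]; exact le_iSup₂_of_le u hu le_rfl
  have hBle : ∀ u ∈ DomAbove R t, ψ u * f u ≤ B := by
    intro u hu; rw [hB]; exact le_iSup₂_of_le u hu le_rfl
  rcases eq_or_ne B ⊤ with hBtop | hBne
  · have h1 : Tsup R ψ f t = ⊤ := by
      unfold Tsup
      rw [← hB, hBtop, ENNReal.top_div_of_ne_top (qc_ne_top hqψ ht)]
    rw [h1, ENNReal.mul_top (ENNReal.ofReal_pos.mpr hCψ).ne', add_top]
    exact le_top
  · have hbound : ∀ s ∈ DomAbove R t, ψ s * dstar f s ≤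
        ENNReal.ofReal Cφ * (A / φ t) * ψ t + ENNReal.ofReal Cψ * B := by
      intro s hsm
      have hsd : s ∈ DomIoo R := dom_of_above ht hsm
      have hts : t < s := hsm.1
      have hs0 : (ENNReal.ofReal s) ≠ 0 := (ENNReal.ofReal_pos.mpr hsd.1).ne'
      have hsplit : (∫⁻ u in Ioo (0:ℝ) s, f u) =
          (∫⁻ u in Ioo (0:ℝ) t, f u) + ∫⁻ u in Ioo t s, f u := by
        have hu : Ioo (0:ℝ) s = Ioc 0 t ∪ Ioo t s := (Set.Ioc_union_Ioo_eq_Ioo ht.1.le hts).symm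
        have hdisj : Disjoint (Ioc (0:ℝ) t) (Ioo t s) :=
          Set.disjoint_left.mpr fun x hx hx' => absurd hx.2 (not_le.mpr hx'.1)
        rw [hu, Measure.restrict_union hdisj measurableSet_Ioo, lintegral_add_measure]
        congr 1
        rw [show (volume : Measure ℝ).restrict (Ioc (0:ℝ) t) = volume.restrict (Ioo (0:ℝ) t)
          from (Measure.restrict_congr_set Ioo_ae_eq_Ioc).symm]
      have hI₁ : (∫⁻ u in Ioo (0:ℝ) t, f u) ≤
          ENNReal.ofReal Cφ * (ENNReal.ofReal t / φ t) * A :=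
        integral_bound hqφ hCφ hBφ ht measurableSet_Ioo (subset_refl _) hAle
      have hI₂ : (∫⁻ u in Ioo t s, f u) ≤
          ENNReal.ofReal Cψ * (ENNReal.ofReal s / ψ s) * B :=
        integral_bound hqψ hCψ hBψ hsd measurableSet_Ioo (Ioo_subset_Ioo ht.1.le le_rfl)
          (fun u (hu : u ∈ Ioo t s) => hBle u ⟨hu.1,
            lt_of_le_of_lt (ENNReal.ofReal_le_ofReal hu.2.le) hsd.2⟩)
      have hds : ψ s * dstar f s =
          ψ s * ((∫⁻ u in Ioo (0:ℝ) t, f u) / ENNReal.ofReal s) +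
          ψ s * ((∫⁻ u in Ioo t s, f u) / ENNReal.ofReal s) := by
        unfold dstar
        rw [hsplit, ENNReal.add_div, mul_add]
      rw [hds]
      apply add_le_add
      · calc ψ s * ((∫⁻ u in Ioo (0:ℝ) t, f u) / ENNReal.ofReal s)
            = (ψ s / ENNReal.ofReal s) * (∫⁻ u in Ioo (0:ℝ) t, f u) := by
              rw [div_eq_mul_inv, div_eq_mul_inv, mul_assoc, mul_comm (ENNReal.ofReal s)⁻¹]
          _ ≤ (ψ t / ENNReal.ofReal t) * (∫⁻ u in Ioo (0:ℝ) t, f u) :=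
              mul_le_mul_left (hqψ.2.2.2 t s ht hts.le hsd) _
          _ ≤ (ψ t / ENNReal.ofReal t) * (ENNReal.ofReal Cφ * (ENNReal.ofReal t / φ t) * A) :=
              mul_le_mul_right hI₁ _
          _ = ENNReal.ofReal Cφ * (A / φ t) * ψ t :=
              cancel₃ (ENNReal.ofReal_pos.mpr ht.1).ne' ENNReal.ofReal_ne_top
      · calc ψ s * ((∫⁻ u in Ioo t s, f u) / ENNReal.ofReal s)
            ≤ ψ s * ((ENNReal.ofReal Cψ * (ENNReal.ofReal s / ψ s) * B) / ENNReal.ofReal s) :=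
              mul_le_mul_right (ENNReal.div_le_div_right hI₂ _) _
          _ = ENNReal.ofReal Cψ * B := cancel₂ hs0 ENNReal.ofReal_ne_top
              (qc_pos hqψ hsd) (qc_ne_top hqψ hsd)
    calc Tsup R ψ (dstar f) t
        ≤ (ENNReal.ofReal Cφ * (A / φ t) * ψ t + ENNReal.ofReal Cψ * B) / ψ t :=
          ENNReal.div_le_div_right (iSup₂_le hbound) _
      _ = ENNReal.ofReal Cφ * (A / φ t) + ENNReal.ofReal Cψ * (B / ψ t) := by
          rw [ENNReal.add_div, mulDivCancelRight _ (qc_pos hqψ ht) (qc_ne_top hqψ ht),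
            mul_div_assoc]
      _ = ENNReal.ofReal Cφ * Ssup φ f t + ENNReal.ofReal Cψ * Tsup R ψ f t := rfl

end S11

/-- `S_φ(f**) + T_ψ(f**) ≃ S_φ f + T_ψ f` holds for all nonneg. nonincreasing `f` iff
both `φ ∈ B` and `ψ ∈ B`. -/
theorem statement11 (R : ℝ≥0∞) (hR : 0 < R) (φ ψ : ℝ → ℝ≥0∞)
    (hφ : QuasiConcaveOn R φ) (hψ : QuasiConcaveOn R ψ) :
    (∃ C : ℝ, 0 < C ∧ ∀ f : ℝ → ℝ≥0∞, NonincOn R f → ∀ t ∈ DomIoo R,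
        (ENNReal.ofReal C)⁻¹ * (Ssup φ f t + Tsup R ψ f t) ≤
            Ssup φ (dstar f) t + Tsup R ψ (dstar f) t ∧
        Ssup φ (dstar f) t + Tsup R ψ (dstar f) t ≤
            ENNReal.ofReal C * (Ssup φ f t + Tsup R ψ f t)) ↔
      (BCond R φ ∧ BCond R ψ) := by
  constructor
  · rintro ⟨C, hC, H⟩
    have Hu : ∀ f : ℝ → ℝ≥0∞, NonincOn R f → ∀ t ∈ DomIoo R,
        Ssup φ (dstar f) t + Tsup R ψ (dstar f) t ≤
          ENNReal.ofReal C * (Ssup φ f t + Tsup R ψ f t) :=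
      fun f hf t ht => (H f hf t ht).2
    exact ⟨S11.nec_phi hφ Hu, S11.nec_psi hφ hψ Hu⟩
  · rintro ⟨⟨Cφ, hCφ, hBφ⟩, ⟨Cψ, hCψ, hBψ⟩⟩
    refine ⟨2 * Cφ + Cψ + 1, by positivity, fun f hf t ht => ⟨?_, ?_⟩⟩
    · calc (ENNReal.ofReal (2 * Cφ + Cψ + 1))⁻¹ * (Ssup φ f t + Tsup R ψ f t)
          ≤ 1 * (Ssup φ f t + Tsup R ψ f t) :=
            mul_le_mul_left (ENNReal.inv_le_one.mpr
              (ENNReal.one_le_ofReal.mpr (by linarith))) _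
        _ = Ssup φ f t + Tsup R ψ f t := one_mul _
        _ ≤ Ssup φ (dstar f) t + Tsup R ψ (dstar f) t := S11.lower_bound hf ht
    · have h1 := S11.upper_S hφ hCφ hBφ (f := f) ht
      have h2 := S11.upper_T hφ hψ hCφ hCψ hBφ hBψ (f := f) ht
      have hA : ENNReal.ofReal Cφ + ENNReal.ofReal Cφ ≤ ENNReal.ofReal (2 * Cφ + Cψ + 1) := by
        rw [← ENNReal.ofReal_add hCφ.le hCφ.le]
        exact ENNReal.ofReal_le_ofReal (by linarith)
      have hB : ENNReal.ofReal Cψ ≤ ENNReal.ofReal (2 * Cφ + Cψ + 1) :=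
        ENNReal.ofReal_le_ofReal (by linarith)
      calc Ssup φ (dstar f) t + Tsup R ψ (dstar f) t
          ≤ ENNReal.ofReal Cφ * Ssup φ f t +
              (ENNReal.ofReal Cφ * Ssup φ f t + ENNReal.ofReal Cψ * Tsup R ψ f t) :=
            add_le_add h1 h2
        _ = (ENNReal.ofReal Cφ + ENNReal.ofReal Cφ) * Ssup φ f t +
              ENNReal.ofReal Cψ * Tsup R ψ f t := by ring
        _ ≤ ENNReal.ofReal (2 * Cφ + Cψ + 1) * Ssup φ f t +
              ENNReal.ofReal (2 * Cφ + Cψ + 1) * Tsup R ψ f t :=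
            add_le_add (mul_le_mul_left hA _) (mul_le_mul_left hB _)
        _ = ENNReal.ofReal (2 * Cφ + Cψ + 1) * (Ssup φ f t + Tsup R ψ f t) :=
            (mul_add _ _ _).symm
end
end

section
/- Let 0 < R ≤ ∞, let 1 ≤ p < ∞, and let w be a weight on (0,R). Then there exists a constant C > 0 such that sup_{0<s<R} f(s) ≤ C · ( ∫₀ᴿ (f**(t))^p w(t) dt )^{1/p} for every nonnegative nonincreasing measurable function f on (0,R) if and only if inf_{0<t<R} ( ∫₀ᵗ w(s) ds + t^p ∫ₜᴿ s^{-p} w(s) ds ) > 0. Moreover, since w is positive, this infimum condition is equivalent to lim inf_{t→0⁺} t^p ∫ₜᴿ s^{-p} w(s) ds > 0. (This characterizes the embedding Γ^p_w(0,R) ⊂ L^∞(0,R).) -/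
open MeasureTheory Set ENNReal Filter

noncomputable section

lemma measurableSet_domIoo (R : ℝ≥0∞) : MeasurableSet (DomIoo R) := by
  have : DomIoo R = Ioi 0 ∩ ENNReal.ofReal ⁻¹' (Iio R) := by ext x; simp [DomIoo]
  rw [this]
  exact measurableSet_Ioi.inter (ENNReal.measurable_ofReal measurableSet_Iio)

lemma measurableSet_domAbove (R : ℝ≥0∞) (t : ℝ) : MeasurableSet (DomAbove R t) := by
  have : DomAbove R t = Ioi t ∩ ENNReal.ofReal ⁻¹' (Iio R) := by ext x; simp [DomAbove]
  rw [this]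
  exact measurableSet_Ioi.inter (ENNReal.measurable_ofReal measurableSet_Iio)

lemma Ioo_subset_domIoo {R : ℝ≥0∞} {t : ℝ} (ht : t ∈ DomIoo R) : Ioo 0 t ⊆ DomIoo R :=
  fun x hx => ⟨hx.1, lt_of_le_of_lt (ENNReal.ofReal_le_ofReal hx.2.le) ht.2⟩

lemma domIoo_nonempty {R : ℝ≥0∞} (hR : 0 < R) : ∃ t, t ∈ DomIoo R := by
  rcases eq_or_ne R ⊤ with h | h
  · exact ⟨1, one_pos, by simp [h]⟩
  · have hRt : 0 < R.toReal := ENNReal.toReal_pos hR.ne' h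
    refine ⟨R.toReal / 2, half_pos hRt, ?_⟩
    rw [ENNReal.ofReal_lt_iff_lt_toReal (by positivity) h]
    exact half_lt_self hRt

lemma disj_Ioo_domAbove (R : ℝ≥0∞) (t : ℝ) : Disjoint (Ioo 0 t) (DomAbove R t) :=
  Set.disjoint_left.mpr fun x hx hx' => absurd hx.2 (not_lt.mpr hx'.1.le)

lemma ind_lint (t₀ t : ℝ) (ht : 0 < t) (ht₀ : 0 < t₀) :
    (∫⁻ s in Ioo (0 : ℝ) t, (Iic t₀).indicator (1 : ℝ → ℝ≥0∞) s) = ENNReal.ofReal (min t t₀) := by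
  rw [lintegral_indicator measurableSet_Iic]
  simp only [Pi.one_apply]
  rw [setLIntegral_one, Measure.restrict_apply measurableSet_Iic]
  rcases le_or_gt t t₀ with h | h
  · have : Iic t₀ ∩ Ioo 0 t = Ioo 0 t := by
      apply inter_eq_self_of_subset_right
      exact fun x hx => le_trans hx.2.le h
    rw [this, Real.volume_Ioo, min_eq_left h, sub_zero]
  · have : Iic t₀ ∩ Ioo 0 t = Ioc 0 t₀ := by
      ext x
      constructor
      · rintro ⟨h1, h2, h3⟩; exact ⟨h2, h1⟩
      · rintro ⟨h1, h2⟩; exact ⟨h2, h1, lt_of_le_of_lt h2 h⟩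
    rw [this, Real.volume_Ioc, min_eq_right h.le, sub_zero]

/-- Test function computation: for `t₀ ∈ DomIoo R`, the indicator of `Iic t₀` witnesses
the value `I t₀` of the integral. -/
lemma testfun_bound {R : ℝ≥0∞} {p : ℝ} (hp : 1 ≤ p) {w : ℝ → ℝ≥0∞}
    {t₀ : ℝ} (ht₀ : t₀ ∈ DomIoo R) :
    (∫⁻ t in DomIoo R, dstar ((Iic t₀).indicator 1) t ^ p * w t) ≤
      (∫⁻ s in Ioo (0 : ℝ) t₀, w s) + ENNReal.ofReal t₀ ^ p *
        ∫⁻ s in DomAbove R t₀, ENNReal.ofReal s ^ (-p) * w s := by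
  have hp0 : (0:ℝ) ≤ p := le_trans zero_le_one hp
  set f : ℝ → ℝ≥0∞ := (Iic t₀).indicator 1 with hf
  have hsub : DomIoo R ⊆ (Ioo 0 t₀ ∪ {t₀}) ∪ DomAbove R t₀ := by
    intro t ht
    rcases lt_trichotomy t t₀ with h | h | h
    · exact Or.inl (Or.inl ⟨ht.1, h⟩)
    · exact Or.inl (Or.inr h)
    · exact Or.inr ⟨h, ht.2⟩
  calc (∫⁻ t in DomIoo R, dstar f t ^ p * w t)
      ≤ ∫⁻ t in (Ioo 0 t₀ ∪ {t₀}) ∪ DomAbove R t₀, dstar f t ^ p * w t :=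
        lintegral_mono_set hsub
    _ ≤ (∫⁻ t in Ioo 0 t₀ ∪ {t₀}, dstar f t ^ p * w t) +
        ∫⁻ t in DomAbove R t₀, dstar f t ^ p * w t := lintegral_union_le _ _ _
    _ ≤ ((∫⁻ t in Ioo 0 t₀, dstar f t ^ p * w t) + ∫⁻ t in {t₀}, dstar f t ^ p * w t) +
        ∫⁻ t in DomAbove R t₀, dstar f t ^ p * w t := by
          gcongr; exact lintegral_union_le _ _ _
    _ = (∫⁻ s in Ioo (0 : ℝ) t₀, w s) + ENNReal.ofReal t₀ ^ p *
        ∫⁻ s in DomAbove R t₀, ENNReal.ofReal s ^ (-p) * w s := by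
          have h1 : (∫⁻ t in Ioo 0 t₀, dstar f t ^ p * w t) = ∫⁻ s in Ioo (0 : ℝ) t₀, w s := by
            apply setLIntegral_congr_fun measurableSet_Ioo
            intro t htm
            have hdt : dstar f t = 1 := by
              rw [dstar, hf, ind_lint t₀ t htm.1 ht₀.1, min_eq_left htm.2.le,
                ENNReal.div_self (by simpa using htm.1) ENNReal.ofReal_ne_top]
            show dstar f t ^ p * w t = _
            rw [hdt, ENNReal.one_rpow, one_mul]
          have h2 : (∫⁻ t in ({t₀} : Set ℝ), dstar f t ^ p * w t) = 0 :=
            setLIntegral_measure_zero _ _ (Real.volume_singleton)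
          have h3 : (∫⁻ t in DomAbove R t₀, dstar f t ^ p * w t) =
              ENNReal.ofReal t₀ ^ p * ∫⁻ s in DomAbove R t₀, ENNReal.ofReal s ^ (-p) * w s := by
            rw [← lintegral_const_mul' _ _ (ENNReal.rpow_ne_top_of_nonneg hp0 ENNReal.ofReal_ne_top)]
            apply setLIntegral_congr_fun (measurableSet_domAbove R t₀)
            intro t htm
            have h0t : 0 < t := lt_trans ht₀.1 htm.1
            have hdt : dstar f t = ENNReal.ofReal t₀ / ENNReal.ofReal t := by
              rw [dstar, hf, ind_lint t₀ t h0t ht₀.1, min_eq_right htm.1.le]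
            show dstar f t ^ p * w t = _
            rw [hdt, ENNReal.div_rpow_of_nonneg _ _ hp0, div_eq_mul_inv,
              ← ENNReal.rpow_neg, mul_assoc]
          rw [h1, h2, h3, add_zero]

/-- Lower bound for the Gamma functional in terms of `I(s₀)`, for nonincreasing `f`. -/
lemma gamma_lower {R : ℝ≥0∞} {p : ℝ} (hp : 1 ≤ p) {w : ℝ → ℝ≥0∞} (hwm : Measurable w)
    {f : ℝ → ℝ≥0∞} (hf : NonincOn R f) {s₀ : ℝ} (hs₀ : s₀ ∈ DomIoo R) :
    f s₀ ^ p * ((∫⁻ s in Ioo (0 : ℝ) s₀, w s) + ENNReal.ofReal s₀ ^ p *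
        ∫⁻ s in DomAbove R s₀, ENNReal.ofReal s ^ (-p) * w s) ≤
      ∫⁻ t in DomIoo R, dstar f t ^ p * w t := by
  have hp0 : (0:ℝ) ≤ p := le_trans zero_le_one hp
  set a := f s₀ with ha
  -- basic integral bound
  have hbase : ∀ t : ℝ, 0 < t → t ≤ s₀ → a * ENNReal.ofReal t ≤ ∫⁻ s in Ioo (0 : ℝ) t, f s := by
    intro t h0t hts
    have : a * ENNReal.ofReal t = ∫⁻ s in Ioo (0 : ℝ) t, a := by
      rw [setLIntegral_const, Real.volume_Ioo, sub_zero]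
    rw [this]
    apply setLIntegral_mono' measurableSet_Ioo
    intro x hx
    exact hf.2 x s₀ ⟨hx.1, lt_of_le_of_lt (ENNReal.ofReal_le_ofReal (le_trans hx.2.le hts))
      hs₀.2⟩ (le_trans hx.2.le hts) hs₀
  -- dstar bound on (0, s₀)
  have h1 : ∀ t ∈ Ioo (0:ℝ) s₀, a ≤ dstar f t := by
    intro t htm
    rw [dstar, ENNReal.le_div_iff_mul_le (Or.inl (by simpa using htm.1))
      (Or.inl ENNReal.ofReal_ne_top)]
    exact hbase t htm.1 htm.2.le
  -- dstar bound above s₀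
  have h2 : ∀ t ∈ DomAbove R s₀, a * ENNReal.ofReal s₀ / ENNReal.ofReal t ≤ dstar f t := by
    intro t htm
    rw [dstar]
    apply ENNReal.div_le_div_right
    exact le_trans (hbase s₀ hs₀.1 le_rfl) (lintegral_mono_set (Ioo_subset_Ioo_right htm.1.le))
  have hg : Measurable fun s : ℝ => ENNReal.ofReal s ^ (-p) * w s :=
    (ENNReal.measurable_ofReal.pow_const _).mul hwm
  have key1 : a ^ p * (∫⁻ s in Ioo (0 : ℝ) s₀, w s) ≤
      ∫⁻ t in Ioo (0:ℝ) s₀, dstar f t ^ p * w t := by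
    rw [← lintegral_const_mul _ hwm]
    apply setLIntegral_mono' measurableSet_Ioo
    intro t htm
    exact mul_le_mul_left (ENNReal.rpow_le_rpow (h1 t htm) hp0) _
  have key2 : a ^ p * (ENNReal.ofReal s₀ ^ p *
      ∫⁻ s in DomAbove R s₀, ENNReal.ofReal s ^ (-p) * w s) ≤
      ∫⁻ t in DomAbove R s₀, dstar f t ^ p * w t := by
    rw [← mul_assoc, ← lintegral_const_mul _ hg]
    apply setLIntegral_mono' (measurableSet_domAbove R s₀)
    intro t htm
    have hlb : (a * ENNReal.ofReal s₀ / ENNReal.ofReal t) ^ p ≤ dstar f t ^ p :=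
      ENNReal.rpow_le_rpow (h2 t htm) hp0
    have hexp : (a * ENNReal.ofReal s₀ / ENNReal.ofReal t) ^ p =
        a ^ p * ENNReal.ofReal s₀ ^ p * (ENNReal.ofReal t ^ (-p)) := by
      rw [ENNReal.div_rpow_of_nonneg _ _ hp0, ENNReal.mul_rpow_of_nonneg _ _ hp0,
        div_eq_mul_inv, ← ENNReal.rpow_neg]
    calc a ^ p * ENNReal.ofReal s₀ ^ p * (ENNReal.ofReal t ^ (-p) * w t)
        = (a * ENNReal.ofReal s₀ / ENNReal.ofReal t) ^ p * w t := by rw [hexp]; ring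
      _ ≤ dstar f t ^ p * w t := mul_le_mul_left hlb _
  calc a ^ p * ((∫⁻ s in Ioo (0 : ℝ) s₀, w s) + ENNReal.ofReal s₀ ^ p *
        ∫⁻ s in DomAbove R s₀, ENNReal.ofReal s ^ (-p) * w s)
      = a ^ p * (∫⁻ s in Ioo (0 : ℝ) s₀, w s) + a ^ p * (ENNReal.ofReal s₀ ^ p *
        ∫⁻ s in DomAbove R s₀, ENNReal.ofReal s ^ (-p) * w s) := mul_add _ _ _
    _ ≤ (∫⁻ t in Ioo (0:ℝ) s₀, dstar f t ^ p * w t) +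
        ∫⁻ t in DomAbove R s₀, dstar f t ^ p * w t := add_le_add key1 key2
    _ = ∫⁻ t in Ioo (0:ℝ) s₀ ∪ DomAbove R s₀, dstar f t ^ p * w t :=
        (lintegral_union (measurableSet_domAbove R s₀) (disj_Ioo_domAbove R s₀)).symm
    _ ≤ ∫⁻ t in DomIoo R, dstar f t ^ p * w t := by
        apply lintegral_mono_set
        apply union_subset (Ioo_subset_domIoo hs₀)
        exact fun x hx => ⟨lt_trans hs₀.1 hx.1, hx.2⟩

/-- We can make `∫₀ᵗ w` as small as we like for `t` near `0`. -/
lemma W_small {R : ℝ≥0∞} {w : ℝ → ℝ≥0∞} (hw : IsWeight R w) {t₀ : ℝ} (ht₀ : t₀ ∈ DomIoo R)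
    {ε : ℝ≥0∞} (hε : 0 < ε) :
    ∃ δ : ℝ, 0 < δ ∧ δ ≤ t₀ ∧ (∫⁻ s in Ioo (0 : ℝ) δ, w s) < ε := by
  set μ := volume.withDensity w with hμ
  have happ : ∀ t : ℝ, μ (Ioo 0 t) = ∫⁻ s in Ioo (0 : ℝ) t, w s := fun t =>
    withDensity_apply w measurableSet_Ioo
  set s : ℕ → Set ℝ := fun k => Ioo (0:ℝ) (t₀ / (k + 1)) with hs
  have hanti : Antitone s := by
    intro k l hkl
    apply Ioo_subset_Ioo_right
    have h1 : ((k:ℝ) + 1) ≤ (l:ℝ) + 1 := by exact_mod_cast Nat.succ_le_succ hkl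
    exact div_le_div_of_nonneg_left ht₀.1.le (by positivity) h1
  have hempty : ⋂ k, s k = ∅ := by
    apply eq_empty_iff_forall_notMem.mpr
    intro x hx
    have hx0 : 0 < x := (mem_iInter.mp hx 0).1
    obtain ⟨k, hk⟩ := exists_nat_gt (t₀ / x)
    have hxk := (mem_iInter.mp hx k).2
    have : t₀ / ((k:ℝ) + 1) < x := by
      rw [div_lt_iff₀ (by positivity)]
      have h2 : t₀ < k * x := (div_lt_iff₀ hx0).mp hk
      nlinarith
    exact absurd hxk (not_lt.mpr this.le)
  have hfin : ∃ k, μ (s k) ≠ ⊤ := by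
    refine ⟨0, ?_⟩
    rw [happ]
    have hsub : Ioo (0:ℝ) (t₀ / (((0:ℕ):ℝ) + 1)) ⊆ Ioo 0 t₀ := by norm_num
    exact (lt_of_le_of_lt (lintegral_mono_set hsub) (hw.2.2 t₀ ht₀)).ne
  have htend : Tendsto (μ ∘ s) atTop (nhds (μ (⋂ k, s k))) :=
    tendsto_measure_iInter_atTop (fun k => measurableSet_Ioo.nullMeasurableSet) hanti hfin
  rw [hempty, measure_empty] at htend
  obtain ⟨k, hk⟩ := (htend.eventually_lt_const hε).exists
  have h00 : 0 < t₀ := ht₀.1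
  refine ⟨t₀ / (k + 1), by positivity, ?_, ?_⟩
  · apply div_le_self ht₀.1.le; norm_num
  · rw [← happ]; exact hk

/-- Positivity of the weight integral. -/
lemma W_pos {R : ℝ≥0∞} {w : ℝ → ℝ≥0∞} (hw : IsWeight R w) {t₁ : ℝ} (ht₁ : t₁ ∈ DomIoo R) :
    0 < ∫⁻ s in Ioo (0 : ℝ) t₁, w s := by
  rw [pos_iff_ne_zero]
  intro h0
  rw [lintegral_eq_zero_iff hw.1] at h0
  have := h0
  rw [Filter.EventuallyEq, ae_iff, Measure.restrict_apply' measurableSet_Ioo] at this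
  have hsub : Ioo (0:ℝ) t₁ ⊆ {x | ¬ w x = (0:ℝ→ℝ≥0∞) x} := by
    intro x hx
    simp only [mem_setOf_eq, Pi.zero_apply]
    exact (hw.2.1 x (Ioo_subset_domIoo ht₁ hx)).1.ne'
  rw [inter_eq_self_of_subset_right hsub, Real.volume_Ioo, sub_zero] at this
  exact absurd this (by rw [ENNReal.ofReal_eq_zero]; exact not_le.mpr ht₁.1)

/-- The embedding `Γ^p_w(0,R) ⊂ L^∞(0,R)` holds iff
`inf_{0<t<R} (∫₀ᵗ w + t^p ∫ₜᴿ s^{-p} w) > 0`; moreover, since `w` is positive, this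
is equivalent to `liminf_{t→0⁺} t^p ∫ₜᴿ s^{-p} w > 0`. -/
theorem statement17 (R : ℝ≥0∞) (hR : 0 < R) (p : ℝ) (hp : 1 ≤ p)
    (w : ℝ → ℝ≥0∞) (hw : IsWeight R w) :
    ((∃ C : ℝ, 0 < C ∧ ∀ f : ℝ → ℝ≥0∞, NonincOn R f →
        (⨆ s ∈ DomIoo R, f s) ≤ ENNReal.ofReal C *
          (∫⁻ t in DomIoo R, dstar f t ^ p * w t) ^ (1 / p)) ↔
      0 < ⨅ t ∈ DomIoo R,
        ((∫⁻ s in Ioo (0 : ℝ) t, w s) + ENNReal.ofReal t ^ p *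
          ∫⁻ s in DomAbove R t, ENNReal.ofReal s ^ (-p) * w s)) ∧
    ((0 < ⨅ t ∈ DomIoo R,
        ((∫⁻ s in Ioo (0 : ℝ) t, w s) + ENNReal.ofReal t ^ p *
          ∫⁻ s in DomAbove R t, ENNReal.ofReal s ^ (-p) * w s)) ↔
      0 < Filter.liminf (fun t : ℝ => ENNReal.ofReal t ^ p *
          ∫⁻ s in DomAbove R t, ENNReal.ofReal s ^ (-p) * w s)
          (nhdsWithin 0 (Ioi 0))) := by
  have hp0 : (0:ℝ) ≤ p := le_trans zero_le_one hp
  have hpne : p ≠ 0 := by linarith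
  set W : ℝ → ℝ≥0∞ := fun t => ∫⁻ s in Ioo (0 : ℝ) t, w s with hW
  set J : ℝ → ℝ≥0∞ := fun t => ENNReal.ofReal t ^ p *
    ∫⁻ s in DomAbove R t, ENNReal.ofReal s ^ (-p) * w s with hJ
  refine ⟨⟨?_, ?_⟩, ?_, ?_⟩
  · -- embedding → inf > 0
    rintro ⟨C, hC, hemb⟩
    have hCne : ENNReal.ofReal C ≠ 0 := by simpa using hC
    have hKpos : 0 < (ENNReal.ofReal C)⁻¹ ^ p :=
      ENNReal.rpow_pos (ENNReal.inv_pos.mpr ENNReal.ofReal_ne_top)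
        (ENNReal.inv_ne_top.mpr hCne)
    refine lt_of_lt_of_le hKpos (le_iInf₂ fun t₀ ht₀ => ?_)
    set f : ℝ → ℝ≥0∞ := (Iic t₀).indicator 1 with hf
    have hfni : NonincOn R f := by
      constructor
      · exact measurable_const.indicator measurableSet_Iic
      · intro s t _ hst _
        rw [hf]
        rcases le_or_gt t t₀ with h | h
        · rw [indicator_of_mem (mem_Iic.mpr h), indicator_of_mem (mem_Iic.mpr (hst.trans h))]
          exact le_rfl
        · rw [indicator_of_notMem (by simpa using h)]
          exact zero_le
    have hsup : (1:ℝ≥0∞) ≤ ⨆ s ∈ DomIoo R, f s := by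
      have : f t₀ = 1 := by rw [hf, indicator_of_mem (mem_Iic.mpr le_rfl)]; rfl
      rw [← this]
      exact le_iSup₂ (f := fun s (_ : s ∈ DomIoo R) => f s) t₀ ht₀
    have h1 : (1:ℝ≥0∞) ≤ ENNReal.ofReal C *
        (∫⁻ t in DomIoo R, dstar f t ^ p * w t) ^ (1 / p) :=
      le_trans hsup (hemb f hfni)
    set X := ∫⁻ t in DomIoo R, dstar f t ^ p * w t with hX
    have hK : (ENNReal.ofReal C)⁻¹ ≤ X ^ (1 / p) := by
      calc (ENNReal.ofReal C)⁻¹ = (ENNReal.ofReal C)⁻¹ * 1 := (mul_one _).symm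
        _ ≤ (ENNReal.ofReal C)⁻¹ * (ENNReal.ofReal C * X ^ (1 / p)) := mul_le_mul_right h1 _
        _ = ((ENNReal.ofReal C)⁻¹ * ENNReal.ofReal C) * X ^ (1 / p) := (mul_assoc _ _ _).symm
        _ = X ^ (1 / p) := by rw [ENNReal.inv_mul_cancel hCne ENNReal.ofReal_ne_top, one_mul]
    have hKp : (ENNReal.ofReal C)⁻¹ ^ p ≤ X := by
      have := ENNReal.rpow_le_rpow hK hp0
      rwa [← ENNReal.rpow_mul, one_div_mul_cancel hpne, ENNReal.rpow_one] at this
    exact le_trans hKp (testfun_bound hp ht₀)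
  · -- inf > 0 → embedding
    intro hM
    set M := ⨅ t ∈ DomIoo R, (W t + J t) with hMdef
    set n : ℝ≥0∞ := min M 1 with hn
    have hn0 : 0 < n := lt_min hM zero_lt_one
    have hn1 : n ≤ 1 := min_le_right _ _
    have hnt : n ≠ ⊤ := (lt_of_le_of_lt hn1 ENNReal.one_lt_top).ne
    set c : ℝ≥0∞ := n ^ (1 / p) with hc
    have hc0 : c ≠ 0 := (ENNReal.rpow_pos hn0 hnt).ne'
    have hct : c ≠ ⊤ :=
      (lt_of_le_of_lt (ENNReal.rpow_le_one hn1 (by positivity)) ENNReal.one_lt_top).ne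
    have hcR : 0 < c.toReal := ENNReal.toReal_pos hc0 hct
    refine ⟨c.toReal⁻¹, inv_pos.mpr hcR, fun f hf => ?_⟩
    have hofC : ENNReal.ofReal c.toReal⁻¹ = c⁻¹ := by
      rw [ENNReal.ofReal_inv_of_pos hcR, ENNReal.ofReal_toReal hct]
    have hkey : ENNReal.ofReal c.toReal⁻¹ * n ^ (1 / p) = 1 := by
      rw [hofC, ← hc, ENNReal.inv_mul_cancel hc0 hct]
    apply iSup₂_le
    intro s₀ hs₀
    set X := ∫⁻ t in DomIoo R, dstar f t ^ p * w t with hX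
    have hXlow : f s₀ ^ p * n ≤ X := by
      refine le_trans ?_ (gamma_lower hp hw.1 hf hs₀)
      apply mul_le_mul_right
      exact le_trans (min_le_left _ _) (iInf₂_le s₀ hs₀)
    have hXr : f s₀ * n ^ (1 / p) ≤ X ^ (1 / p) := by
      have h := ENNReal.rpow_le_rpow hXlow (by positivity : (0:ℝ) ≤ 1 / p)
      rwa [ENNReal.mul_rpow_of_nonneg _ _ (by positivity : (0:ℝ) ≤ 1 / p),
        ← ENNReal.rpow_mul, mul_one_div_cancel hpne, ENNReal.rpow_one] at h
    calc f s₀ = 1 * f s₀ := (one_mul _).symm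
      _ = (ENNReal.ofReal c.toReal⁻¹ * n ^ (1 / p)) * f s₀ := by rw [hkey]
      _ = ENNReal.ofReal c.toReal⁻¹ * (f s₀ * n ^ (1 / p)) := by ring
      _ ≤ ENNReal.ofReal c.toReal⁻¹ * X ^ (1 / p) := mul_le_mul_right hXr _
  · -- inf > 0 → liminf > 0
    intro hM
    set M := ⨅ t ∈ DomIoo R, (W t + J t) with hMdef
    set n : ℝ≥0∞ := min M 1 with hn
    have hn0 : 0 < n := lt_min hM zero_lt_one
    have hn1 : n ≤ 1 := min_le_right _ _
    have hnt2 : n / 2 ≠ ⊤ :=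
      (lt_of_le_of_lt (le_trans ENNReal.half_le_self hn1) ENNReal.one_lt_top).ne
    obtain ⟨t₀, ht₀⟩ := domIoo_nonempty hR
    obtain ⟨δ, hδ0, hδt₀, hWδ⟩ := W_small hw ht₀ (ENNReal.half_pos hn0.ne' : 0 < n / 2)
    have hclaim : ∀ t ∈ Ioo (0:ℝ) δ, n / 2 ≤ J t := by
      intro t htm
      have htD : t ∈ DomIoo R := ⟨htm.1,
        lt_of_le_of_lt (ENNReal.ofReal_le_ofReal (le_trans htm.2.le hδt₀)) ht₀.2⟩
      have hIt : n ≤ W t + J t := le_trans (min_le_left _ _) (iInf₂_le t htD)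
      have hWt : W t ≤ n / 2 :=
        le_trans (lintegral_mono_set (Ioo_subset_Ioo_right htm.2.le)) hWδ.le
      by_contra hJt
      rw [not_le] at hJt
      have : W t + J t < n := by
        calc W t + J t ≤ n / 2 + J t := add_le_add_left hWt _
          _ < n / 2 + n / 2 := ENNReal.add_lt_add_left hnt2 hJt
          _ = n := ENNReal.add_halves n
      exact absurd hIt (not_le.mpr this)
    have hev : ∀ᶠ t in nhdsWithin (0:ℝ) (Ioi 0), n / 2 ≤ J t :=
      Filter.eventually_iff.mpr (mem_of_superset
        (Ioo_mem_nhdsGT_of_mem ⟨le_refl (0:ℝ), hδ0⟩) hclaim)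
    refine lt_of_lt_of_le (ENNReal.half_pos hn0.ne' : 0 < n / 2) ?_
    rw [Filter.liminf_eq]
    exact le_sSup hev
  · -- liminf > 0 → inf > 0
    intro hl
    rw [Filter.liminf_eq] at hl
    obtain ⟨c, hcmem, hc0⟩ := lt_sSup_iff.mp hl
    obtain ⟨δ, hδ, hsub⟩ := mem_nhdsGT_iff_exists_Ioo_subset.mp hcmem
    obtain ⟨t₀, ht₀⟩ := domIoo_nonempty hR
    set t₁ : ℝ := min (δ / 2) t₀ with ht₁def
    have ht₁0 : 0 < t₁ := lt_min (half_pos hδ) ht₀.1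
    have ht₁D : t₁ ∈ DomIoo R := ⟨ht₁0,
      lt_of_le_of_lt (ENNReal.ofReal_le_ofReal (min_le_right _ _)) ht₀.2⟩
    have hW1 : 0 < W t₁ := W_pos hw ht₁D
    refine lt_of_lt_of_le (lt_min hc0 hW1) (le_iInf₂ fun t ht => ?_)
    rcases lt_or_ge t δ with h | h
    · have hcJ : c ≤ J t := hsub ⟨ht.1, h⟩
      exact le_trans (min_le_left _ _) (le_trans hcJ le_add_self)
    · have ht₁t : t₁ ≤ t :=
        le_trans (min_le_left _ _) (le_trans (half_le_self hδ.le) h)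
      have : W t₁ ≤ W t := lintegral_mono_set (Ioo_subset_Ioo_right ht₁t)
      exact le_trans (min_le_right _ _) (le_trans this le_self_add)
end
end
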